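/- Let G = {x − Sx : x ∈ l∞} where S is the shift operator, and let N = {y ∈ l∞ : y_k = z_k for almost all k, for some z ∈ G}. Then N is a linear subspace of l∞ and the distance from the constant sequence 1 = (1,1,1,...) to N in the sup norm equals 1. -/

import Mathlib

open Filter

open scoped Classical in
/-- The sequence of partial densities of `P ⊆ ℕ`. -/
noncomputable def densSeq (P : Set ℕ) (n : ℕ) : ℝ :=
  (((Finset.range n).filter (fun k => k ∈ P)).card : ℝ) / n

/-- `P` has natural density `d`. -/
def HasDensity (P : Set ℕ) (d : ℝ) : Prop :=
  Tendsto (densSeq P) atTop (nhds d)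

/-- Statistical convergence of a real sequence to `l`. -/
def StatTendsto (x : ℕ → ℝ) (l : ℝ) : Prop :=
  ∀ ε : ℝ, 0 < ε → HasDensity {n | |x n - l| > ε} 0

/-- The space `l∞` of bounded real sequences with sup norm. -/
noncomputable abbrev Linf := lp (fun _ : ℕ => ℝ) ⊤

open scoped Classical in
lemma densSeq_nonneg (P : Set ℕ) (n : ℕ) : 0 ≤ densSeq P n := by
  unfold densSeq; positivity

open scoped Classical in
lemma densSeq_mono {P Q : Set ℕ} (h : Q ⊆ P) (n : ℕ) : densSeq Q n ≤ densSeq P n := by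
  unfold densSeq
  rcases eq_or_ne n 0 with rfl | hn
  · simp
  · rw [div_le_div_iff_of_pos_right (by positivity)]
    refine Nat.cast_le.mpr (Finset.card_le_card ?_)
    intro k hk
    rw [Finset.mem_filter] at hk ⊢
    exact ⟨hk.1, h hk.2⟩

lemma hd_zero_mono {P Q : Set ℕ} (h : Q ⊆ P) (hP : HasDensity P 0) : HasDensity Q 0 := by
  refine squeeze_zero (fun n => densSeq_nonneg Q n) (fun n => densSeq_mono h n) hP

open scoped Classical in
lemma densSeq_union_le (P Q : Set ℕ) (n : ℕ) :
    densSeq (P ∪ Q) n ≤ densSeq P n + densSeq Q n := by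
  unfold densSeq
  rw [← add_div]
  rcases eq_or_ne n 0 with rfl | hn
  · simp
  · rw [div_le_div_iff_of_pos_right (by positivity)]
    push_cast
    have h2 : (Finset.range n).filter (fun k => k ∈ P ∪ Q)
        ⊆ ((Finset.range n).filter (fun k => k ∈ P)) ∪ ((Finset.range n).filter (fun k => k ∈ Q)) := by
      intro k hk
      rw [Finset.mem_filter] at hk
      rw [Finset.mem_union, Finset.mem_filter, Finset.mem_filter]
      rcases hk.2 with h | h
      · exact Or.inl ⟨hk.1, h⟩
      · exact Or.inr ⟨hk.1, h⟩
    have h3 := Nat.cast_le (α := ℝ) |>.mpr ((Finset.card_le_card h2).trans (Finset.card_union_le _ _))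
    push_cast at h3
    convert h3 using 4
    rfl


lemma hd_zero_union {P Q : Set ℕ} (hP : HasDensity P 0) (hQ : HasDensity Q 0) :
    HasDensity (P ∪ Q) 0 := by
  have := hP.add hQ
  rw [add_zero] at this
  exact squeeze_zero (fun n => densSeq_nonneg _ n) (densSeq_union_le P Q) this

lemma hd_empty : HasDensity (∅ : Set ℕ) 0 := by
  have : densSeq (∅ : Set ℕ) = fun _ => 0 := by
    funext n; unfold densSeq; simp
  rw [HasDensity, this]; exact tendsto_const_nhds

lemma linf_apply_le_norm (f : Linf) (k : ℕ) : |f k| ≤ ‖f‖ :=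
  lp.norm_apply_le_norm ENNReal.top_ne_zero f k

theorem N_subspace_and_dist_one :
    ∃ N : Submodule ℝ Linf,
      -- `N` consists of the sequences agreeing a.a.k with some element `z = x - Sx` of `G`
      (N : Set Linf) =
        {y : Linf | ∃ x : Linf, HasDensity {k | y k ≠ x k - x (k + 1)} 0} ∧
      Metric.infDist (1 : Linf) (N : Set Linf) = 1 := by
  set NS : Set Linf := {y : Linf | ∃ x : Linf, HasDensity {k | y k ≠ x k - x (k + 1)} 0} with hNS
  have hzero : (0 : Linf) ∈ NS := by
    refine ⟨0, ?_⟩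
    have : {k : ℕ | (0 : Linf) k ≠ (0 : Linf) k - (0 : Linf) (k + 1)} = ∅ := by
      ext k; simp
    rw [this]; exact hd_empty
  have hadd : ∀ y z : Linf, y ∈ NS → z ∈ NS → y + z ∈ NS := by
    rintro y z ⟨x, hx⟩ ⟨w, hw⟩
    refine ⟨x + w, hd_zero_mono ?_ (hd_zero_union hx hw)⟩
    intro k hk
    simp only [Set.mem_setOf_eq, lp.coeFn_add, Pi.add_apply] at hk ⊢
    by_contra hcon
    simp only [Set.mem_union, Set.mem_setOf_eq, not_or, not_not] at hcon
    exact hk (by rw [hcon.1, hcon.2]; ring)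
  have hsmul : ∀ (c : ℝ) (y : Linf), y ∈ NS → c • y ∈ NS := by
    rintro c y ⟨x, hx⟩
    refine ⟨c • x, hd_zero_mono ?_ hx⟩
    intro k hk
    simp only [Set.mem_setOf_eq, lp.coeFn_smul, Pi.smul_apply, smul_eq_mul] at hk ⊢
    intro h
    exact hk (by rw [h]; ring)
  refine ⟨{ carrier := NS, add_mem' := fun {a b} ha hb => hadd a b ha hb,
            zero_mem' := hzero, smul_mem' := fun c y hy => hsmul c y hy }, rfl, ?_⟩
  -- distance = 1
  apply le_antisymm
  · have h0 : (0 : Linf) ∈ NS := hzero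
    calc Metric.infDist (1 : Linf) NS ≤ dist (1 : Linf) 0 := Metric.infDist_le_dist_of_mem h0
    _ = ‖(1 : Linf)‖ := by rw [dist_zero_right]
    _ = 1 := norm_one
  · by_contra hlt'
    push_neg at hlt'
    obtain ⟨y, hyN, hlt⟩ := (Metric.infDist_lt_iff ⟨0, hzero⟩).mp hlt'
    obtain ⟨x, hx⟩ := hyN
    set b := dist (1 : Linf) y with hb
    have hbn : b = ‖(1 : Linf) - y‖ := dist_eq_norm _ _
    set δ := 1 - b with hδ
    have hδpos : 0 < δ := by simp [hδ]; linarith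
    -- pointwise lower bound: y k ≥ δ
    have hyk : ∀ k, δ ≤ y k := by
      intro k
      have h1 : |((1 : Linf) - y) k| ≤ b := by rw [hbn]; exact linf_apply_le_norm _ k
      have h2 : ((1 : Linf) - y) k = 1 - y k := by
        rw [lp.coeFn_sub, Pi.sub_apply, lp.infty_coeFn_one, Pi.one_apply]
      rw [h2, abs_le] at h1
      linarith [h1.2]
    set B := {k : ℕ | y k ≠ x k - x (k + 1)} with hB
    set C := ‖y‖ + 2 * ‖x‖ with hC
    have hCpos : 0 ≤ C := by positivity
    -- key inequality
    classical
    have key : ∀ n : ℕ, 0 < n → δ ≤ 2 * ‖x‖ / n + C * densSeq B n := by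
      intro n hn
      have hsum1 : (n : ℝ) * δ ≤ ∑ k ∈ Finset.range n, y k := by
        calc (n : ℝ) * δ = ∑ _k ∈ Finset.range n, δ := by
              rw [Finset.sum_const, Finset.card_range, nsmul_eq_mul]
        _ ≤ ∑ k ∈ Finset.range n, y k := Finset.sum_le_sum fun k _ => hyk k
      have hsplit : ∑ k ∈ Finset.range n, y k
          = (x 0 - x n) + ∑ k ∈ Finset.range n, (y k - (x k - x (k + 1))) := by
        rw [← Finset.sum_range_sub' (fun k => x k), ← Finset.sum_add_distrib]
        congr 1; funext k; ring_nf
      have hsum2 : ∑ k ∈ Finset.range n, (y k - (x k - x (k + 1)))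
          ≤ C * ((Finset.range n).filter (fun k => k ∈ B)).card := by
        calc ∑ k ∈ Finset.range n, (y k - (x k - x (k + 1)))
            ≤ ∑ k ∈ Finset.range n, (if k ∈ B then C else 0) := by
              apply Finset.sum_le_sum
              intro k _
              by_cases hkB : k ∈ B
              · simp only [hkB, if_true]
                have := abs_sub (y k) (x k - x (k+1))
                calc y k - (x k - x (k+1)) ≤ |y k - (x k - x (k+1))| := le_abs_self _
                _ ≤ |y k| + |x k - x (k+1)| := abs_sub _ _
                _ ≤ |y k| + (|x k| + |x (k+1)|) := by linarith [abs_sub_abs_le_abs_sub (x k) (x (k+1)), abs_sub (x k) (x (k+1))]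
                _ ≤ ‖y‖ + (‖x‖ + ‖x‖) := by
                    have := linf_apply_le_norm y k
                    have := linf_apply_le_norm x k
                    have := linf_apply_le_norm x (k+1)
                    linarith
                _ = C := by rw [hC]; ring
              · simp only [hkB, if_false]
                have : y k = x k - x (k+1) := by_contra fun h => hkB h
                linarith [this]
          _ = ∑ k ∈ (Finset.range n).filter (fun k => k ∈ B), C := (Finset.sum_filter _ _).symm
          _ = C * ((Finset.range n).filter (fun k => k ∈ B)).card := by
              rw [Finset.sum_const, nsmul_eq_mul]; ring
      have hx0 : x 0 - x n ≤ 2 * ‖x‖ := by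
        have := linf_apply_le_norm x 0
        have := linf_apply_le_norm x n
        rw [abs_le] at *
        linarith [(linf_apply_le_norm x 0), (linf_apply_le_norm x n)]
      have hnpos : (0 : ℝ) < n := by exact_mod_cast hn
      have htotal : (n : ℝ) * δ ≤ 2 * ‖x‖ + C * ((Finset.range n).filter (fun k => k ∈ B)).card := by
        rw [hsplit] at hsum1; linarith
      have hdens : C * ((Finset.range n).filter (fun k => k ∈ B)).card / n = C * densSeq B n := by
        unfold densSeq
        rw [mul_div_assoc]
        congr!
      calc δ = (n : ℝ) * δ / n := by field_simp
      _ ≤ (2 * ‖x‖ + C * ((Finset.range n).filter (fun k => k ∈ B)).card) / n := by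
          rw [div_le_div_iff_of_pos_right hnpos] at *
          exact htotal
      _ = 2 * ‖x‖ / n + C * densSeq B n := by rw [add_div, hdens]
      _ ≤ 2 * ‖x‖ / n + C * densSeq B n := le_refl _
    -- take the limit
    have hlim : Tendsto (fun n : ℕ => 2 * ‖x‖ / n + C * densSeq B n) atTop (nhds 0) := by
      have h1 : Tendsto (fun n : ℕ => 2 * ‖x‖ / n) atTop (nhds 0) :=
        tendsto_const_nhds.div_atTop tendsto_natCast_atTop_atTop
      have h2 : Tendsto (fun n : ℕ => C * densSeq B n) atTop (nhds 0) := by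
        have := hx.const_mul C
        rwa [mul_zero] at this
      have := h1.add h2
      rwa [add_zero] at this
    have : δ ≤ 0 := ge_of_tendsto hlim (by
      filter_upwards [eventually_gt_atTop 0] with n hn
      exact key n hn)
    linarith
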